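/- Define polynomials P_3 = 1 + c + d, Q_3 = 1, and for n ≥ 3, P_{n+1} = P_n^2 + c·P_n·Q_n + d·Q_n^2, Q_{n+1} = P_n^2. Then for all n ≥ 3: (a) the constant term of P_n is 1; (b) the coefficient of c^{deg P_n} in P_n is nonzero; (c) the coefficient of d^{deg P_n} in P_n is nonzero. -/

import Mathlib

open MvPolynomial

/-- The pair `(P_{n+3}, Q_{n+3})` of polynomials in `c = X 0` and `d = X 1`:
`P_3 = 1 + c + d`, `Q_3 = 1`, `P_{n+1} = P_n² + c·P_n·Q_n + d·Q_n²`, `Q_{n+1} = P_n²`. -/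
noncomputable def PQ : ℕ → MvPolynomial (Fin 2) ℤ × MvPolynomial (Fin 2) ℤ
  | 0 => (1 + X 0 + X 1, 1)
  | (n + 1) =>
      ((PQ n).1 ^ 2 + X 0 * (PQ n).1 * (PQ n).2 + X 1 * (PQ n).2 ^ 2, (PQ n).1 ^ 2)

/-- `P_n` for `n ≥ 3`. -/
noncomputable def Ppoly (n : ℕ) : MvPolynomial (Fin 2) ℤ := (PQ (n - 3)).1

/-- The degree pair `(deg P, deg Q)`. -/
def ab : ℕ → ℕ × ℕ
  | 0 => (1, 0)
  | (n + 1) => (1 + (ab n).1 + (ab n).2, 2 * (ab n).1)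

lemma ab_inv (m : ℕ) : (ab m).2 ≤ (ab m).1 ∧ (ab m).1 ≤ (ab m).2 + 1 := by
  induction m with
  | zero => simp [ab]
  | succ n ih => simp only [ab]; omega

lemma mulcoeff_nonneg {f g : Polynomial ℤ} (hf : ∀ k, 0 ≤ f.coeff k)
    (hg : ∀ k, 0 ≤ g.coeff k) (k : ℕ) : 0 ≤ (f * g).coeff k := by
  rw [Polynomial.coeff_mul]
  exact Finset.sum_nonneg fun x _ => mul_nonneg (hf _) (hg _)

lemma mulcoeff_pos {f g : Polynomial ℤ} (hf : ∀ k, 0 ≤ f.coeff k)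
    (hg : ∀ k, 0 ≤ g.coeff k) {i j : ℕ} (hi : 0 < f.coeff i) (hj : 0 < g.coeff j) :
    0 < (f * g).coeff (i + j) := by
  rw [Polynomial.coeff_mul]
  refine Finset.sum_pos' (fun x _ => mul_nonneg (hf _) (hg _)) ?_
  exact ⟨(i, j), Finset.HasAntidiagonal.mem_antidiagonal.2 rfl, mul_pos hi hj⟩

lemma Xcoeff_nonneg (k : ℕ) : 0 ≤ (Polynomial.X : Polynomial ℤ).coeff k := by
  rw [Polynomial.coeff_X]
  split <;> norm_num

/-- Setting `d = 0`: the coefficient of `X^D` picks out the coefficient of `c^D`. -/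
lemma coeff_evalc (p : MvPolynomial (Fin 2) ℤ) (D : ℕ) :
    (eval₂ Polynomial.C ![Polynomial.X, 0] p).coeff D = coeff (Finsupp.single 0 D) p := by
  induction p using MvPolynomial.induction_on generalizing D with
  | C a =>
      rw [eval₂_C, Polynomial.coeff_C, coeff_C]
      by_cases h : D = 0
      · subst h; simp
      · rw [if_neg h, if_neg]
        intro h0
        exact h (by simpa [Finsupp.single_eq_zero] using h0.symm)
  | add p q hp hq => rw [eval₂_add, Polynomial.coeff_add, coeff_add, hp, hq]
  | mul_X p i hp =>
      rw [eval₂_mul, eval₂_X, coeff_mul_X']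
      fin_cases i <;> simp only [Fin.mk_zero, Fin.mk_one, Fin.isValue, Matrix.cons_val_zero,
        Matrix.cons_val_one, Matrix.head_cons]
      · cases D with
        | zero =>
            rw [if_neg]
            · simp [Polynomial.mul_coeff_zero]
            · simp
        | succ D =>
            rw [if_pos, Polynomial.coeff_mul_X, hp]
            · congr 1
              ext j
              rcases eq_or_ne j 0 with rfl | hj <;>
                simp [Finsupp.single_apply, Finsupp.single_eq_of_ne, *]
            · simp [Finsupp.mem_support_iff]
      · simp [Finsupp.single_apply, Finsupp.mem_support_iff]

/-- Setting `c = 0`: the coefficient of `X^D` picks out the coefficient of `d^D`. -/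
lemma coeff_evald (p : MvPolynomial (Fin 2) ℤ) (D : ℕ) :
    (eval₂ Polynomial.C ![0, Polynomial.X] p).coeff D = coeff (Finsupp.single 1 D) p := by
  induction p using MvPolynomial.induction_on generalizing D with
  | C a =>
      rw [eval₂_C, Polynomial.coeff_C, coeff_C]
      by_cases h : D = 0
      · subst h; simp
      · rw [if_neg h, if_neg]
        intro h0
        exact h (by simpa [Finsupp.single_eq_zero] using h0.symm)
  | add p q hp hq => rw [eval₂_add, Polynomial.coeff_add, coeff_add, hp, hq]
  | mul_X p i hp =>
      rw [eval₂_mul, eval₂_X, coeff_mul_X']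
      fin_cases i <;> simp only [Fin.mk_zero, Fin.mk_one, Fin.isValue, Matrix.cons_val_zero,
        Matrix.cons_val_one, Matrix.head_cons]
      · simp [Finsupp.single_apply, Finsupp.mem_support_iff]
      · cases D with
        | zero =>
            rw [if_neg]
            · simp [Polynomial.mul_coeff_zero]
            · simp
        | succ D =>
            rw [if_pos, Polynomial.coeff_mul_X, hp]
            · congr 1
              ext j
              rcases eq_or_ne j 1 with rfl | hj <;>
                simp [Finsupp.single_apply, Finsupp.single_eq_of_ne, *]
            · simp [Finsupp.mem_support_iff]

lemma key (m : ℕ) :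
    constantCoeff (PQ m).1 = 1 ∧ constantCoeff (PQ m).2 = 1 ∧
    (PQ m).1.totalDegree ≤ (ab m).1 ∧ (PQ m).2.totalDegree ≤ (ab m).2 ∧
    (∀ k, 0 ≤ (eval₂ Polynomial.C ![Polynomial.X, 0] (PQ m).1).coeff k) ∧
    (∀ k, 0 ≤ (eval₂ Polynomial.C ![Polynomial.X, 0] (PQ m).2).coeff k) ∧
    (∀ k, 0 ≤ (eval₂ Polynomial.C ![0, Polynomial.X] (PQ m).1).coeff k) ∧
    (∀ k, 0 ≤ (eval₂ Polynomial.C ![0, Polynomial.X] (PQ m).2).coeff k) ∧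
    0 < (eval₂ Polynomial.C ![Polynomial.X, 0] (PQ m).1).coeff (ab m).1 ∧
    0 < (eval₂ Polynomial.C ![Polynomial.X, 0] (PQ m).2).coeff (ab m).2 ∧
    0 < (eval₂ Polynomial.C ![0, Polynomial.X] (PQ m).1).coeff (ab m).1 ∧
    0 < (eval₂ Polynomial.C ![0, Polynomial.X] (PQ m).2).coeff (ab m).2 := by
  induction m with
  | zero =>
      have e1 : eval₂ Polynomial.C ![Polynomial.X, 0] (PQ 0).1 = 1 + Polynomial.X := by
        show eval₂ Polynomial.C ![Polynomial.X, 0] (1 + X 0 + X 1) = _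
        simp
      have e2 : eval₂ Polynomial.C ![Polynomial.X, 0] (PQ 0).2 = 1 := by
        show eval₂ Polynomial.C ![Polynomial.X, 0] (1 : MvPolynomial (Fin 2) ℤ) = _
        simp
      have e3 : eval₂ Polynomial.C ![0, Polynomial.X] (PQ 0).1 = 1 + Polynomial.X := by
        show eval₂ Polynomial.C ![0, Polynomial.X] (1 + X 0 + X 1) = _
        simp
      have e4 : eval₂ Polynomial.C ![0, Polynomial.X] (PQ 0).2 = 1 := by
        show eval₂ Polynomial.C ![0, Polynomial.X] (1 : MvPolynomial (Fin 2) ℤ) = _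
        simp
      have hnn : ∀ k, (0:ℤ) ≤ (1 + Polynomial.X : Polynomial ℤ).coeff k := by
        intro k
        rw [Polynomial.coeff_add, Polynomial.coeff_one, Polynomial.coeff_X]
        split_ifs <;> norm_num
      have hpos : (0:ℤ) < (1 + Polynomial.X : Polynomial ℤ).coeff 1 := by
        rw [Polynomial.coeff_add, Polynomial.coeff_one, Polynomial.coeff_X]
        norm_num
      have honenn : ∀ k, (0:ℤ) ≤ (1 : Polynomial ℤ).coeff k := by
        intro k
        rw [Polynomial.coeff_one]
        split_ifs <;> norm_num
      refine ⟨by simp [PQ], by simp [PQ], ?_, ?_, ?_, ?_, ?_, ?_, ?_, ?_, ?_, ?_⟩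
      · show (1 + X 0 + X 1 : MvPolynomial (Fin 2) ℤ).totalDegree ≤ (ab 0).1
        refine le_trans (totalDegree_add _ _) (max_le (le_trans (totalDegree_add _ _)
          (max_le ?_ ?_)) ?_) <;> simp [ab, totalDegree_X, totalDegree_one]
      · show (1 : MvPolynomial (Fin 2) ℤ).totalDegree ≤ (ab 0).2
        simp [totalDegree_one]
      · rw [e1]; exact hnn
      · rw [e2]; exact honenn
      · rw [e3]; exact hnn
      · rw [e4]; exact honenn
      · rw [e1]; exact hpos
      · rw [e2]; simp [Polynomial.coeff_one, ab]
      · rw [e3]; exact hpos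
      · rw [e4]; simp [Polynomial.coeff_one, ab]
  | succ n ih =>
      obtain ⟨hc1, hc2, hd1, hd2, hn1, hn2, hn3, hn4, hp1, hp2, hp3, hp4⟩ := ih
      obtain ⟨hba, hab⟩ := ab_inv n
      set P := (PQ n).1 with hP
      set Q := (PQ n).2 with hQ
      set a := (ab n).1 with ha
      set b := (ab n).2 with hb
      have hPQ1 : (PQ (n + 1)).1 = P ^ 2 + X 0 * P * Q + X 1 * Q ^ 2 := rfl
      have hPQ2 : (PQ (n + 1)).2 = P ^ 2 := rfl
      have hab1 : (ab (n + 1)).1 = 1 + a + b := rfl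
      have hab2 : (ab (n + 1)).2 = 2 * a := rfl
      set F := eval₂ Polynomial.C ![Polynomial.X, 0] P with hF
      set G := eval₂ Polynomial.C ![Polynomial.X, 0] Q with hG
      set F' := eval₂ Polynomial.C ![0, Polynomial.X] P with hF'
      set G' := eval₂ Polynomial.C ![0, Polynomial.X] Q with hG'
      have e1 : eval₂ Polynomial.C ![Polynomial.X, 0] (PQ (n + 1)).1
          = F * F + Polynomial.X * F * G := by
        rw [hPQ1]
        simp only [eval₂_add, eval₂_mul, eval₂_pow, eval₂_X, Matrix.cons_val_zero,
          Matrix.cons_val_one, Matrix.head_cons, pow_two, ← hF, ← hG]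
        ring
      have e2 : eval₂ Polynomial.C ![Polynomial.X, 0] (PQ (n + 1)).2 = F * F := by
        rw [hPQ2]
        simp only [eval₂_pow, eval₂_mul, pow_two, ← hF]
      have e3 : eval₂ Polynomial.C ![0, Polynomial.X] (PQ (n + 1)).1
          = F' * F' + Polynomial.X * G' * G' := by
        rw [hPQ1]
        simp only [eval₂_add, eval₂_mul, eval₂_pow, eval₂_X, Matrix.cons_val_zero,
          Matrix.cons_val_one, Matrix.head_cons, pow_two, ← hF', ← hG']
        ring
      have e4 : eval₂ Polynomial.C ![0, Polynomial.X] (PQ (n + 1)).2 = F' * F' := by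
        rw [hPQ2]
        simp only [eval₂_pow, eval₂_mul, pow_two, ← hF']
      have hXF : ∀ k, 0 ≤ (Polynomial.X * F).coeff k :=
        mulcoeff_nonneg Xcoeff_nonneg hn1
      have hXG' : ∀ k, 0 ≤ (Polynomial.X * G').coeff k :=
        mulcoeff_nonneg Xcoeff_nonneg hn4
      have hXpos : (0:ℤ) < (Polynomial.X : Polynomial ℤ).coeff 1 := by
        simp [Polynomial.coeff_X]
      refine ⟨?_, ?_, ?_, ?_, ?_, ?_, ?_, ?_, ?_, ?_, ?_, ?_⟩
      · rw [hPQ1]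
        simp [map_add, map_mul, map_pow, hc1, hc2]
      · rw [hPQ2]
        simp [map_pow, hc1]
      · rw [hPQ1, hab1]
        refine le_trans (totalDegree_add _ _) (max_le (le_trans (totalDegree_add _ _)
          (max_le ?_ ?_)) ?_)
        · exact le_trans (totalDegree_pow _ _) (by omega)
        · refine le_trans (totalDegree_mul _ _) ?_
          have := le_trans (totalDegree_mul (X 0 : MvPolynomial (Fin 2) ℤ) P)
            (add_le_add (le_of_eq (totalDegree_X 0)) hd1)
          omega
        · have := le_trans (totalDegree_mul (X 1 : MvPolynomial (Fin 2) ℤ) (Q ^ 2))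
            (add_le_add (le_of_eq (totalDegree_X 1))
              (le_trans (totalDegree_pow _ _) (by omega : 2 * Q.totalDegree ≤ 2 * b)))
          omega
      · rw [hPQ2, hab2]
        exact le_trans (totalDegree_pow _ _) (by omega)
      · intro k
        rw [e1, Polynomial.coeff_add]
        exact add_nonneg (mulcoeff_nonneg hn1 hn1 k) (mulcoeff_nonneg hXF hn2 k)
      · intro k
        rw [e2]; exact mulcoeff_nonneg hn1 hn1 k
      · intro k
        rw [e3, Polynomial.coeff_add]
        exact add_nonneg (mulcoeff_nonneg hn3 hn3 k) (mulcoeff_nonneg hXG' hn4 k)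
      · intro k
        rw [e4]; exact mulcoeff_nonneg hn3 hn3 k
      · rw [e1, hab1, Polynomial.coeff_add]
        have h2 : (0:ℤ) < (Polynomial.X * F * G).coeff (1 + a + b) :=
          mulcoeff_pos hXF hn2 (mulcoeff_pos Xcoeff_nonneg hn1 hXpos hp1) hp2
        have h1 : (0:ℤ) ≤ (F * F).coeff (1 + a + b) := mulcoeff_nonneg hn1 hn1 _
        linarith
      · rw [e2, hab2, two_mul]
        exact mulcoeff_pos hn1 hn1 hp1 hp1
      · rw [e3, hab1, Polynomial.coeff_add]
        rcases Nat.lt_or_ge b a with hlt | hge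
        · have haeq : 1 + a + b = a + a := by omega
          rw [haeq]
          have h1 : (0:ℤ) < (F' * F').coeff (a + a) := mulcoeff_pos hn3 hn3 hp3 hp3
          have h2 : (0:ℤ) ≤ (Polynomial.X * G' * G').coeff (a + a) :=
            mulcoeff_nonneg hXG' hn4 _
          linarith
        · have haeq : a = b := le_antisymm hge hba
          have haeq2 : 1 + a + b = (1 + b) + b := by omega
          rw [haeq2]
          have h1 : (0:ℤ) < (Polynomial.X * G' * G').coeff ((1 + b) + b) :=
            mulcoeff_pos hXG' hn4 (mulcoeff_pos Xcoeff_nonneg hn4 hXpos hp4) hp4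
          have h2 : (0:ℤ) ≤ (F' * F').coeff ((1 + b) + b) := mulcoeff_nonneg hn3 hn3 _
          linarith
      · rw [e4, hab2, two_mul]
        exact mulcoeff_pos hn3 hn3 hp3 hp3

theorem Ppoly_constant_term_and_extreme_coeffs (n : ℕ) (hn : 3 ≤ n) :
    coeff 0 (Ppoly n) = 1 ∧
    coeff (Finsupp.single 0 (Ppoly n).totalDegree) (Ppoly n) ≠ 0 ∧
    coeff (Finsupp.single 1 (Ppoly n).totalDegree) (Ppoly n) ≠ 0 := by
  set m := n - 3 with hm
  obtain ⟨hc1, _, hd1, _, _, _, _, _, hp1, _, hp3, _⟩ := key m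
  have hPp : Ppoly n = (PQ m).1 := rfl
  have hcoeffc : coeff (Finsupp.single 0 (ab m).1) (PQ m).1 ≠ 0 := by
    rw [← coeff_evalc]; exact ne_of_gt hp1
  have htd : (PQ m).1.totalDegree = (ab m).1 := by
    refine le_antisymm hd1 ?_
    have hmem : Finsupp.single 0 (ab m).1 ∈ (PQ m).1.support :=
      mem_support_iff.2 hcoeffc
    have := le_totalDegree hmem
    simpa [Finsupp.sum_single_index] using this
  refine ⟨?_, ?_, ?_⟩
  · rw [hPp, ← constantCoeff_eq]; exact hc1
  · rw [hPp, htd]; exact hcoeffc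
  · rw [hPp, htd, ← coeff_evald]
    exact ne_of_gt hp3
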